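/- arXiv:1904.12082 — 5 statements merged into one kernel-verified Lean document; each statement's English description precedes it below -/
import Mathlib

section
/- Let A be a symmetric positive definite d×d real matrix with smallest eigenvalue at least κ > 0, and let B be the 2d×2d block matrix B = [[0, -I_d], [A, γI_d]] with γ > 0. Then every eigenvalue μ of B satisfies Re(μ) ≥ δ_γ', where δ_γ' = γ/2 if 0 < γ ≤ 2√κ, and δ_γ' = (γ - √(γ² - 4κ))/2 if γ > 2√κ. -/
open Matrix

/-- Every eigenvalue `μ` of the block matrix `B = [[0, -I],[A, γI]]`, where `A` is
symmetric positive definite with smallest eigenvalue at least `κ > 0` and `γ > 0`,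
satisfies `Re μ ≥ δ'_γ` with `δ'_γ = γ/2` for `0 < γ ≤ 2√κ` and
`δ'_γ = (γ - √(γ²-4κ))/2` for `γ > 2√κ`. -/
theorem stmt2 (d : ℕ) (A : Matrix (Fin d) (Fin d) ℝ) (κ γ : ℝ)
    (hκ : 0 < κ) (hγ : 0 < γ)
    (hAsym : A.IsSymm)
    (hA : ∀ v : Fin d → ℝ, κ * (v ⬝ᵥ v) ≤ v ⬝ᵥ (A *ᵥ v))
    (B : Matrix (Fin d ⊕ Fin d) (Fin d ⊕ Fin d) ℝ)
    (hB : B = Matrix.fromBlocks 0 (-1) A (γ • 1))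
    (μ : ℂ)
    (hμ : (B.map (Complex.ofReal) - μ • (1 : Matrix (Fin d ⊕ Fin d) (Fin d ⊕ Fin d) ℂ)).det = 0) :
    (if γ ≤ 2 * Real.sqrt κ then γ / 2 else (γ - Real.sqrt (γ ^ 2 - 4 * κ)) / 2) ≤ μ.re := by
  have hM : B.map Complex.ofReal - μ • (1 : Matrix (Fin d ⊕ Fin d) (Fin d ⊕ Fin d) ℂ)
      = Matrix.fromBlocks (-(μ•1)) (-1) (A.map Complex.ofReal) (((γ:ℂ)-μ)•1) := by
    subst hB
    ext (i|i) (j|j) <;>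
      simp [Matrix.map_apply, Matrix.one_apply, Matrix.smul_apply, Matrix.sub_apply] <;>
      split <;> simp [sub_mul]
  rw [hM] at hμ
  obtain ⟨w, hw0, hw⟩ := Matrix.exists_mulVec_eq_zero_iff.mpr hμ
  rw [fromBlocks_mulVec] at hw
  set u : Fin d → ℂ := w ∘ Sum.inl with hu
  set v : Fin d → ℂ := w ∘ Sum.inr with hv
  have hw' := congrFun hw
  have eq1 : ∀ i, -(μ * u i) + (-(v i)) = 0 := by
    intro i
    have := hw' (Sum.inl i)
    simpa [neg_mulVec, smul_mulVec, one_mulVec] using this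
  have eq2 : ∀ i, (A.map Complex.ofReal *ᵥ u) i + ((γ:ℂ) - μ) * v i = 0 := by
    intro i
    have := hw' (Sum.inr i)
    simpa [smul_mulVec, one_mulVec] using this
  have hvu : ∀ i, v i = -(μ * u i) := fun i => by linear_combination -eq1 i
  set lam : ℂ := γ * μ - μ ^ 2 with hlam
  have hAu : ∀ i, (A.map Complex.ofReal *ᵥ u) i = lam * u i := by
    intro i
    have h := eq2 i
    rw [hvu i] at h
    linear_combination h
  have hu0 : u ≠ 0 := by
    intro h
    apply hw0
    funext i
    cases i with
    | inl i => exact congrFun h i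
    | inr i => show v i = 0; rw [hvu i, congrFun h i]; simp
  set x : Fin d → ℝ := fun i => (u i).re with hx
  set y : Fin d → ℝ := fun i => (u i).im with hy
  have hmvre : ∀ i, ((A.map Complex.ofReal *ᵥ u) i).re = (A *ᵥ x) i := by
    intro i
    simp [Matrix.mulVec, dotProduct, Complex.re_sum, Complex.mul_re, hx]
  have hmvim : ∀ i, ((A.map Complex.ofReal *ᵥ u) i).im = (A *ᵥ y) i := by
    intro i
    simp [Matrix.mulVec, dotProduct, Complex.im_sum, Complex.mul_im, hy]
  have key1 : ∀ i, x i * (A *ᵥ x) i + y i * (A *ᵥ y) i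
      = lam.re * (x i * x i + y i * y i) := by
    intro i
    have h1 : (A *ᵥ x) i = lam.re * (u i).re - lam.im * (u i).im := by
      rw [← hmvre i, hAu i, Complex.mul_re]
    have h2 : (A *ᵥ y) i = lam.re * (u i).im + lam.im * (u i).re := by
      rw [← hmvim i, hAu i, Complex.mul_im]
    simp only [hx, hy]
    linear_combination (u i).re * h1 + (u i).im * h2
  have key2 : ∀ i, x i * (A *ᵥ y) i - y i * (A *ᵥ x) i
      = lam.im * (x i * x i + y i * y i) := by
    intro i
    have h1 : (A *ᵥ x) i = lam.re * (u i).re - lam.im * (u i).im := by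
      rw [← hmvre i, hAu i, Complex.mul_re]
    have h2 : (A *ᵥ y) i = lam.re * (u i).im + lam.im * (u i).re := by
      rw [← hmvim i, hAu i, Complex.mul_im]
    simp only [hx, hy]
    linear_combination (u i).re * h2 - (u i).im * h1
  set N : ℝ := x ⬝ᵥ x + y ⬝ᵥ y with hN
  have hNsum : N = ∑ i, (x i * x i + y i * y i) := by
    simp [hN, dotProduct, Finset.sum_add_distrib]
  have hNpos : 0 < N := by
    obtain ⟨i, hi⟩ := Function.ne_iff.mp hu0
    rw [hNsum]
    have hipos : 0 < x i * x i + y i * y i := by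
      have := Complex.normSq_pos.mpr hi
      simpa [Complex.normSq_apply, hx, hy] using this
    exact Finset.sum_pos' (fun j _ => add_nonneg (mul_self_nonneg _) (mul_self_nonneg _)) ⟨i, Finset.mem_univ i, hipos⟩
  have hre_sum : x ⬝ᵥ (A *ᵥ x) + y ⬝ᵥ (A *ᵥ y) = lam.re * N := by
    rw [hNsum, Finset.mul_sum]
    simp only [dotProduct, ← Finset.sum_add_distrib]
    exact Finset.sum_congr rfl fun i _ => key1 i
  have him_sum : x ⬝ᵥ (A *ᵥ y) - y ⬝ᵥ (A *ᵥ x) = lam.im * N := by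
    rw [hNsum, Finset.mul_sum]
    simp only [dotProduct, ← Finset.sum_sub_distrib]
    exact Finset.sum_congr rfl fun i _ => key2 i
  have hsym : x ⬝ᵥ (A *ᵥ y) = y ⬝ᵥ (A *ᵥ x) := by
    rw [Matrix.dotProduct_mulVec, ← hAsym, Matrix.vecMul_transpose, dotProduct_comm, hAsym]
  have hlam_im : lam.im = 0 := by
    have h : lam.im * N = 0 := by rw [← him_sum, hsym]; ring
    exact (mul_eq_zero.mp h).resolve_right (ne_of_gt hNpos)
  have hlam_re : κ ≤ lam.re := by
    have h1 : κ * N ≤ lam.re * N := by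
      rw [← hre_sum, hN]
      have := hA x
      have := hA y
      linarith [mul_add κ (x ⬝ᵥ x) (y ⬝ᵥ y)]
    exact le_of_mul_le_mul_right h1 hNpos
  set a : ℝ := μ.re with ha
  set b : ℝ := μ.im with hb
  have him : b * (γ - 2 * a) = 0 := by
    have h := hlam_im
    rw [hlam] at h
    simp [pow_two, Complex.mul_im, Complex.sub_im, ← ha, ← hb] at h
    linarith
  have hre : κ ≤ γ * a - (a * a - b * b) := by
    have h2 : lam.re = γ * a - (a * a - b * b) := by
      rw [hlam]
      simp [pow_two, Complex.mul_re, Complex.sub_re, ← ha, ← hb]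
    linarith [hlam_re, h2]
  have hib : b = 0 ∨ γ = 2 * a := by
    rcases mul_eq_zero.mp him with h | h
    · exact Or.inl h
    · exact Or.inr (by linarith)
  split_ifs with hcase
  · have hγ2 : γ ^ 2 ≤ 4 * κ := by
      nlinarith [Real.sq_sqrt hκ.le, Real.sqrt_nonneg κ]
    rcases hib with h | h
    · nlinarith [sq_nonneg (2 * a - γ), h, hre]
    · linarith
  · push_neg at hcase
    have hγ2 : 4 * κ ≤ γ ^ 2 := by
      nlinarith [Real.sq_sqrt hκ.le, Real.sqrt_nonneg κ]
    set s : ℝ := Real.sqrt (γ ^ 2 - 4 * κ) with hs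
    have hs0 : 0 ≤ s := Real.sqrt_nonneg _
    have hs2 : s ^ 2 = γ ^ 2 - 4 * κ := Real.sq_sqrt (by linarith)
    rcases hib with h | h
    · nlinarith [sq_nonneg (γ - 2 * a - s), sq_nonneg (γ - 2 * a + s), h, hre]
    · linarith
end

section
/- Let A be a symmetric positive definite d×d matrix with orthonormal eigenbasis v_1,...,v_d and eigenvalues λ_1,...,λ_d, and let B = [[0, -I_d], [A, γI_d]]. Define the orthogonal matrix U whose k-th pair of columns is U_k = (1/√2)[[v_k, v_k],[v_k, -v_k]]. Then UᵀBU is block diagonal with 2×2 blocks J_kk = (1/2)[[λ_k+γ-1, λ_k-γ+1], [-λ_k-γ-1, -λ_k+γ+1]]. -/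
open Matrix

/-- Conjugating `B = [[0,-I],[A,γI]]` by the orthogonal matrix `U` built from an
orthonormal eigenbasis of `A` yields a block diagonal matrix whose 2×2 blocks are
`J_kk = (1/2)[[λ_k+γ-1, λ_k-γ+1],[-λ_k-γ-1, -λ_k+γ+1]]`. -/
theorem stmt3 (d : ℕ) (A : Matrix (Fin d) (Fin d) ℝ) (γ : ℝ)
    (v : Fin d → Fin d → ℝ) (lam : Fin d → ℝ)
    (hA : A.IsSymm) (hpos : A.PosDef)
    (heig : ∀ k, A *ᵥ v k = lam k • v k)
    (horth : ∀ k l, v k ⬝ᵥ v l = if k = l then (1 : ℝ) else 0)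
    (B : Matrix (Fin d ⊕ Fin d) (Fin d ⊕ Fin d) ℝ)
    (hB : B = Matrix.fromBlocks 0 (-1) A (γ • 1))
    (U : Matrix (Fin d ⊕ Fin d) (Fin 2 × Fin d) ℝ)
    (hU1 : ∀ i p, U (Sum.inl i) p = v p.2 i / Real.sqrt 2)
    (hU2 : ∀ (i : Fin d) (p : Fin 2 × Fin d),
      U (Sum.inr i) p = (if p.1 = 0 then v p.2 i else -v p.2 i) / Real.sqrt 2) :
    Uᵀ * B * U = Matrix.blockDiagonal (fun k =>
      (1/2 : ℝ) • !![lam k + γ - 1, lam k - γ + 1;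
                     -(lam k) - γ - 1, -(lam k) + γ + 1]) := by
  subst hB
  have h2 : Real.sqrt 2 * Real.sqrt 2 = 2 := Real.mul_self_sqrt (by norm_num)
  have hne : Real.sqrt 2 ≠ 0 := by positivity
  have e0 : ((0 : Fin 2) = 0) = True := by simp
  have e1 : ((1 : Fin 2) = 0) = False := by simp
  have hAv : ∀ (j : Fin d) (k : Fin d), (∑ i, A i j * v k i) = lam k * v k j := by
    intro j k
    have h1 := congrFun (heig k) j
    simp only [Matrix.mulVec, dotProduct, Pi.smul_apply, smul_eq_mul] at h1
    rw [← h1]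
    exact Finset.sum_congr rfl fun i _ => by rw [hA.apply i j]
  have hvv : ∀ k l, (∑ i, v k i * v l i) = if k = l then (1:ℝ) else 0 := by
    intro k l; simpa [dotProduct] using horth k l
  have hS1 : ∀ (x k : Fin d), (∑ x1, v k x1 / Real.sqrt 2 * A x1 x) = lam k * v k x / Real.sqrt 2 := by
    intro x k
    rw [← hAv x k, Finset.sum_div]
    exact Finset.sum_congr rfl fun i _ => by ring
  have hS2 : ∀ (w : Fin d → ℝ) (x : Fin d),
      (∑ x1, w x1 / Real.sqrt 2 * (if x1 = x then (1:ℝ) else 0)) = w x / Real.sqrt 2 := by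
    intro w x; simp [mul_ite]
  have hS3 : ∀ (w : Fin d → ℝ) (x : Fin d),
      (∑ x1, w x1 / Real.sqrt 2 * (γ * if x1 = x then (1:ℝ) else 0)) = γ * (w x / Real.sqrt 2) := by
    intro w x; simp [mul_ite]; ring
  have key : ∀ (k l : Fin d) (c : ℝ) (f : Fin d → ℝ), (∀ x, f x = c * (v k x * v l x)) →
      (∑ x, f x) = if k = l then c else 0 := by
    intro k l c f hf
    simp_rw [hf]; rw [← Finset.mul_sum, hvv]; split_ifs <;> simp
  ext ⟨a, k⟩ ⟨b, l⟩
  fin_cases a <;> fin_cases b <;>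
    simp only [Matrix.mul_apply, Matrix.transpose_apply, Fintype.sum_sum_type,
      Matrix.fromBlocks_apply₁₁, Matrix.fromBlocks_apply₁₂, Matrix.fromBlocks_apply₂₁,
      Matrix.fromBlocks_apply₂₂, Matrix.zero_apply, Matrix.neg_apply, Matrix.one_apply,
      Matrix.smul_apply, smul_eq_mul, hU1, hU2, Matrix.blockDiagonal_apply,
      Fin.mk_zero, Fin.mk_one, e0, e1, if_true, if_false,
      neg_div, neg_mul, mul_neg, neg_neg, Finset.sum_neg_distrib,
      hS1, hS2, hS3, mul_zero, Finset.sum_const_zero, zero_add,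
      Matrix.of_apply, Matrix.cons_val', Matrix.cons_val_zero, Matrix.cons_val_one,
      Matrix.head_cons, Matrix.head_fin_const, Matrix.empty_val'] <;>
    simp only [← Finset.sum_neg_distrib, ← Finset.sum_add_distrib, neg_add, neg_neg, neg_mul] <;>
    exact key k l _ _ (fun x => by field_simp [h2]; ring_nf; norm_num; ring)
end

section
/- Let J be a 2×2 real matrix satisfying J² - γJ + λI = 0 with 0 < γ < 2√λ, and set ω = √(4λ - γ²)/2. Then exp(-Jt) = e^{-γt/2} ( I cos(ωt) - ((2J - γI)/(2ω)) sin(ωt) ) for all t ≥ 0. -/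
open Matrix

open scoped Nat

private lemma pow_even_of_sq {A : Matrix (Fin 2) (Fin 2) ℝ} {r : ℝ}
    (h : A * A = (-(r ^ 2)) • 1) (n : ℕ) :
    A ^ (2 * n) = ((-1 : ℝ) ^ n * r ^ (2 * n)) • (1 : Matrix (Fin 2) (Fin 2) ℝ) := by
  rw [pow_mul, sq, h, smul_pow, one_pow, neg_pow, pow_mul]

private lemma exp_of_sq (A : Matrix (Fin 2) (Fin 2) ℝ) (r : ℝ) (hr : r ≠ 0)
    (h : A * A = (-(r ^ 2)) • 1) :
    NormedSpace.exp A =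
      Real.cos r • (1 : Matrix (Fin 2) (Fin 2) ℝ) + (Real.sin r / r) • A := by
  rw [NormedSpace.exp_eq_tsum ℝ]
  refine HasSum.tsum_eq ?_
  have hc : HasSum (fun n : ℕ => ((-1 : ℝ) ^ n * r ^ (2 * n) / (2 * n)!) •
      (1 : Matrix (Fin 2) (Fin 2) ℝ)) (Real.cos r • 1) :=
    (Real.hasSum_cos r).smul_const 1
  have hs : HasSum (fun n : ℕ => ((-1 : ℝ) ^ n * r ^ (2 * n + 1) / (2 * n + 1)! / r) • A)
      ((Real.sin r / r) • A) :=
    ((Real.hasSum_sin r).div_const r).smul_const A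
  refine HasSum.even_add_odd ?_ ?_
  · convert hc using 2 with n
    · rfl
    rw [pow_even_of_sq h, smul_smul]
    congr 1
    rw [div_eq_inv_mul]
  · convert hs using 2 with n
    · rfl
    have hA : A ^ (2 * n + 1) = ((-1 : ℝ) ^ n * r ^ (2 * n)) • A := by
      rw [pow_succ, pow_even_of_sq h, smul_mul_assoc, one_mul]
    rw [hA, smul_smul]
    congr 1
    rw [pow_succ]
    field_simp

private lemma exp_smul_one (c : ℝ) :
    NormedSpace.exp (c • (1 : Matrix (Fin 2) (Fin 2) ℝ)) =
      Real.exp c • (1 : Matrix (Fin 2) (Fin 2) ℝ) := by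
  rw [Matrix.smul_one_eq_diagonal, Matrix.exp_diagonal, Pi.exp_def,
    Matrix.smul_one_eq_diagonal]
  funext i
  rw [← Real.exp_eq_exp_ℝ]

/-- Underdamped case: if `J² - γJ + λI = 0` with `0 < γ < 2√λ` and
`ω = √(4λ - γ²)/2`, then
`exp(-Jt) = e^{-γt/2} (I cos(ωt) - ((2J - γI)/(2ω)) sin(ωt))`. -/
theorem stmt6 (lam γ : ℝ) (hγ0 : 0 < γ) (hγ : γ < 2 * Real.sqrt lam)
    (J : Matrix (Fin 2) (Fin 2) ℝ)
    (hJ : J * J - γ • J + lam • (1 : Matrix (Fin 2) (Fin 2) ℝ) = 0)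
    (ω : ℝ) (hω : ω = Real.sqrt (4 * lam - γ ^ 2) / 2)
    (t : ℝ) (ht : 0 ≤ t) :
    NormedSpace.exp (-(t • J)) =
      Real.exp (-(γ * t / 2)) •
        (Real.cos (ω * t) • (1 : Matrix (Fin 2) (Fin 2) ℝ) -
          (Real.sin (ω * t) / (2 * ω)) •
            ((2 : ℝ) • J - γ • (1 : Matrix (Fin 2) (Fin 2) ℝ))) := by
  rcases ht.eq_or_lt with h0 | htpos
  · subst h0
    simp [NormedSpace.exp_zero]
  have hsl : 0 < Real.sqrt lam := by linarith
  have hlam : 0 < lam := Real.sqrt_pos.mp hsl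
  have hγ2 : γ ^ 2 < 4 * lam := by
    nlinarith [Real.sq_sqrt hlam.le, Real.sqrt_nonneg lam]
  have hωpos : 0 < ω := by
    rw [hω]
    have : 0 < Real.sqrt (4 * lam - γ ^ 2) := Real.sqrt_pos.mpr (by linarith)
    linarith
  have hω2 : ω ^ 2 = (4 * lam - γ ^ 2) / 4 := by
    rw [hω, div_pow, Real.sq_sqrt (by linarith)]
    norm_num
  set B : Matrix (Fin 2) (Fin 2) ℝ := J - (γ / 2) • 1 with hB
  have hJJ : J * J = γ • J - lam • (1 : Matrix (Fin 2) (Fin 2) ℝ) := by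
    have h := hJ
    rw [sub_add, sub_eq_zero] at h
    exact h
  have hBB : B * B = (-(ω ^ 2)) • (1 : Matrix (Fin 2) (Fin 2) ℝ) := by
    rw [hB, sub_mul, mul_sub, mul_sub, mul_smul_comm, smul_mul_assoc, smul_mul_assoc,
      mul_smul_comm, mul_one, one_mul, one_mul, smul_smul, hJJ, hω2]
    module
  have hsplit : -(t • J) = (-(γ * t / 2)) • (1 : Matrix (Fin 2) (Fin 2) ℝ) + (-t) • B := by
    rw [hB]
    module
  have hcomm : Commute ((-(γ * t / 2)) • (1 : Matrix (Fin 2) (Fin 2) ℝ)) ((-t) • B) :=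
    ((Commute.one_left B).smul_left _).smul_right _
  rw [hsplit, Matrix.exp_add_of_commute _ _ hcomm, exp_smul_one]
  have hBt : ((-t) • B) * ((-t) • B) = (-((ω * t) ^ 2)) • (1 : Matrix (Fin 2) (Fin 2) ℝ) := by
    rw [smul_mul_assoc, mul_smul_comm, smul_smul, hBB, smul_smul]
    congr 1
    ring
  have hrt : ω * t ≠ 0 := by positivity
  rw [exp_of_sq _ _ hrt hBt]
  rw [smul_mul_assoc, one_mul]
  congr 1
  rw [hB]
  match_scalars
  · field_simp
    ring
  · field_simp
end

section
/- For a smooth (or C¹) one-parameter family of square matrices X(t), the derivative of the matrix exponential satisfies d/dt e^{X(t)} = ∫₀¹ e^{βX(t)} X'(t) e^{(1-β)X(t)} dβ. -/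
open Matrix MeasureTheory NormedSpace Filter

section helpers
attribute [local instance] Matrix.linftyOpNormedRing Matrix.linftyOpNormedAlgebra
variable {n : ℕ}

lemma exp_cont_aux (n : ℕ) :
    Continuous (exp : Matrix (Fin n) (Fin n) ℝ → Matrix (Fin n) (Fin n) ℝ) :=
  exp_continuous

lemma duhamel_hasDerivAt_aux (A B : Matrix (Fin n) (Fin n) ℝ) (β : ℝ) :
    HasDerivAt (fun u : ℝ => exp (u • A) * exp ((1 - u) • B))
      (exp (β • A) * (A - B) * exp ((1 - β) • B)) β := by
  have h1 : HasDerivAt (fun u : ℝ => exp (u • A)) (exp (β • A) * A) β :=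
    hasDerivAt_exp_smul_const A β
  have hu : HasDerivAt (fun u : ℝ => 1 - u) (-1) β := by
    simpa using (hasDerivAt_id β).const_sub 1
  have h2 : HasDerivAt (fun u : ℝ => exp ((1 - u) • B))
      ((-1 : ℝ) • (B * exp ((1 - β) • B))) β :=
    HasDerivAt.scomp β (hasDerivAt_exp_smul_const' B (1 - β)) hu
  have h3 := h1.mul h2
  refine h3.congr_deriv ?_
  rw [neg_one_smul]
  noncomm_ring

lemma duhamel_slope_aux (A B : Matrix (Fin n) (Fin n) ℝ) (β : ℝ) :
    Tendsto (slope (fun u : ℝ => exp (u • A) * exp ((1 - u) • B)) β) (nhdsWithin β {β}ᶜ)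
      (nhds (exp (β • A) * (A - B) * exp ((1 - β) • B))) :=
  hasDerivAt_iff_tendsto_slope.mp (duhamel_hasDerivAt_aux A B β)
end helpers

attribute [local instance] Matrix.normedAddCommGroup Matrix.normedSpace
section main
variable {n : ℕ}

lemma exp_cont (n : ℕ) :
    Continuous (exp : Matrix (Fin n) (Fin n) ℝ → Matrix (Fin n) (Fin n) ℝ) :=
  exp_cont_aux n

lemma duhamel_hasDerivAt (A B : Matrix (Fin n) (Fin n) ℝ) (β : ℝ) :
    HasDerivAt (fun u : ℝ => exp (u • A) * exp ((1 - u) • B))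
      (exp (β • A) * (A - B) * exp ((1 - β) • B)) β := by
  refine hasDerivAt_iff_tendsto_slope.mpr ?_
  exact duhamel_slope_aux A B β

lemma duhamel (A B : Matrix (Fin n) (Fin n) ℝ) :
    exp A - exp B
      = ∫ β in (0:ℝ)..1, exp (β • A) * (A - B) * exp ((1 - β) • B) := by
  have hc : Continuous (fun β : ℝ => exp (β • A) * (A - B) * exp ((1 - β) • B)) := by
    apply Continuous.matrix_mul
    · exact Continuous.matrix_mul ((exp_cont n).comp (continuous_id.smul continuous_const))
        continuous_const
    · exact (exp_cont n).comp ((continuous_const.sub continuous_id).smul continuous_const)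
  have key := intervalIntegral.integral_eq_sub_of_hasDerivAt
    (f := fun u : ℝ => exp (u • A) * exp ((1 - u) • B))
    (fun β _ => duhamel_hasDerivAt A B β) (hc.intervalIntegrable 0 1)
  rw [key]
  simp [NormedSpace.exp_zero]
end main

/-- Derivative of the matrix exponential along a C¹ path:
`d/dt e^{X(t)} = ∫₀¹ e^{βX(t)} X'(t) e^{(1-β)X(t)} dβ`. -/
theorem stmt9 (n : ℕ) (X X' : ℝ → Matrix (Fin n) (Fin n) ℝ)
    (hX : ∀ t, HasDerivAt X (X' t) t) (hX' : Continuous X') (t : ℝ) :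
    HasDerivAt (fun s => NormedSpace.exp (X s))
      (∫ β in (0:ℝ)..1,
        NormedSpace.exp (β • X t) * X' t * NormedSpace.exp ((1 - β) • X t)) t := by
  have hXc : Continuous X := continuous_iff_continuousAt.2 fun s => (hX s).continuousAt
  refine hasDerivAt_iff_tendsto_slope.mpr ?_
  have hslopeX : Tendsto (slope X t) (nhdsWithin t {t}ᶜ) (nhds (X' t)) :=
    hasDerivAt_iff_tendsto_slope.mp (hX t)
  set g : ℝ × Matrix (Fin n) (Fin n) ℝ → Matrix (Fin n) (Fin n) ℝ :=
    fun p => ∫ β in (0:ℝ)..1, exp (β • X p.1) * p.2 * exp ((1 - β) • X t) with hgdef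
  have hgc : Continuous g := by
    apply intervalIntegral.continuous_parametric_intervalIntegral_of_continuous'
    show Continuous fun q : (ℝ × Matrix (Fin n) (Fin n) ℝ) × ℝ =>
      exp (q.2 • X q.1.1) * q.1.2 * exp ((1 - q.2) • X t)
    apply Continuous.matrix_mul
    · exact Continuous.matrix_mul
        ((exp_cont n).comp (continuous_snd.smul (hXc.comp (continuous_fst.fst))))
        continuous_fst.snd
    · exact (exp_cont n).comp ((continuous_const.sub continuous_snd).smul continuous_const)
  have h1 : Tendsto (fun s : ℝ => (s, slope X t s)) (nhdsWithin t {t}ᶜ) (nhds (t, X' t)) :=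
    (tendsto_id.mono_right nhdsWithin_le_nhds).prodMk_nhds hslopeX
  have h2 : Tendsto (fun s : ℝ => g (s, slope X t s)) (nhdsWithin t {t}ᶜ)
      (nhds (g (t, X' t))) := Filter.Tendsto.comp (hgc.continuousAt (x := (t, X' t))) h1
  have heq : ∀ᶠ s in nhdsWithin t {t}ᶜ,
      g (s, slope X t s) = slope (fun s => exp (X s)) t s := by
    filter_upwards [self_mem_nhdsWithin] with s hs
    have key : ∀ β : ℝ, exp (β • X s) * ((s - t)⁻¹ • (X s - X t)) * exp ((1 - β) • X t)
        = (s - t)⁻¹ • (exp (β • X s) * (X s - X t) * exp ((1 - β) • X t)) := by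
      intro β; rw [mul_smul_comm, smul_mul_assoc]
    calc g (s, slope X t s)
        = ∫ β in (0:ℝ)..1,
            (s - t)⁻¹ • (exp (β • X s) * (X s - X t) * exp ((1 - β) • X t)) := by
          simp only [hgdef, slope_def_module, key]
      _ = (s - t)⁻¹ • ∫ β in (0:ℝ)..1,
            exp (β • X s) * (X s - X t) * exp ((1 - β) • X t) :=
          intervalIntegral.integral_smul _ _
      _ = slope (fun s => exp (X s)) t s := by
          rw [slope_def_module, duhamel]
  exact (h2.congr' heq)
end

section
/- Let B : ℝ^d → ℝ^{n×n} be differentiable in a parameter r_k with ‖∂B/∂r_k‖₂ ≤ M, and suppose ‖exp(-βBs)‖₂ ≤ C e^{-βδs} for all β ∈ [0,1], s ≥ 0. Then ‖∂/∂r_k exp(-B(r)s)‖₂ ≤ C² M s e^{-δs} for all s ≥ 0. -/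
open Matrix

attribute [local instance] Matrix.normedAddCommGroup Matrix.normedSpace

/-- The operator 2-norm of a square real matrix. -/
noncomputable def opNorm {n : ℕ} (M : Matrix (Fin n) (Fin n) ℝ) : ℝ :=
  ‖Matrix.toEuclideanCLM (𝕜 := ℝ) M‖

open NormedSpace in
/-- `toEuclideanCLM` commutes with the exponential. -/
theorem phi_exp_aux (n : ℕ) (X : Matrix (Fin n) (Fin n) ℝ) :
    Matrix.toEuclideanCLM (𝕜 := ℝ) (exp X) = exp (Matrix.toEuclideanCLM (𝕜 := ℝ) X) := by
  set φ := Matrix.toEuclideanCLM (𝕜 := ℝ) (n := Fin n) with hφ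
  let φL : Matrix (Fin n) (Fin n) ℝ →L[ℝ] (EuclideanSpace ℝ (Fin n) →L[ℝ] EuclideanSpace ℝ (Fin n)) :=
    LinearMap.toContinuousLinearMap (φ : Matrix (Fin n) (Fin n) ℝ →ₗ[ℝ] _)
  let ψL : (EuclideanSpace ℝ (Fin n) →L[ℝ] EuclideanSpace ℝ (Fin n)) →L[ℝ] Matrix (Fin n) (Fin n) ℝ :=
    LinearMap.toContinuousLinearMap (φ.symm.toAlgEquiv.toLinearMap : _ →ₗ[ℝ] Matrix (Fin n) (Fin n) ℝ)
  have hφL : ∀ x, φL x = φ x := fun _ => rfl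
  have hψL : ∀ x, ψL x = φ.symm x := fun _ => rfl
  have hsum2 : Summable (fun k : ℕ => (k.factorial⁻¹ : ℝ) • (φ X) ^ k) :=
    expSeries_summable' (𝕂 := ℝ) (φ X)
  have hkey : ∀ k : ℕ, ψL ((k.factorial⁻¹ : ℝ) • (φ X) ^ k) = (k.factorial⁻¹ : ℝ) • X ^ k := by
    intro k
    rw [hψL, _root_.map_smul, map_pow, StarAlgEquiv.symm_apply_apply]
  have hsum1 : Summable (fun k : ℕ => (k.factorial⁻¹ : ℝ) • X ^ k) := by
    have := hsum2.mapL ψL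
    simpa only [hkey] using this
  rw [exp_eq_tsum ℝ, exp_eq_tsum ℝ]
  have := φL.map_tsum hsum1
  rw [hφL] at this
  rw [this]
  congr 1
  funext k
  rw [hφL, _root_.map_smul, map_pow]

open NormedSpace in
/-- Duhamel-type estimate in a Banach algebra. -/
theorem duhamel_aux {A : Type*} [NormedRing A] [NormedAlgebra ℝ A] [CompleteSpace A]
    (a₁ a₂ : A) (s C δ : ℝ) (hs : 0 ≤ s)
    (hb2 : ∀ t ∈ Set.Icc (0:ℝ) s, ‖exp ((t - s) • a₂)‖ ≤ C * Real.exp (-(δ * (s - t))))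
    (hb1 : ∀ t ∈ Set.Icc (0:ℝ) s, ‖exp (t • (-a₁))‖ ≤ C * Real.exp (-(δ * t))) :
    ‖exp (-(s • a₁)) - exp (-(s • a₂))‖ ≤
      (C ^ 2 * Real.exp (-(δ * s)) * ‖a₂ - a₁‖) * s := by
  set H : ℝ → A := fun t => exp ((t - s) • a₂) * exp (t • (-a₁)) with hH
  set H' : ℝ → A := fun t => exp ((t - s) • a₂) * ((a₂ - a₁) * exp (t • (-a₁))) with hH'
  have hderiv : ∀ t : ℝ, HasDerivAt H (H' t) t := by
    intro t
    have h2 : HasDerivAt (fun t : ℝ => exp ((t - s) • a₂)) (exp ((t - s) • a₂) * a₂) t := by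
      have hg : HasDerivAt (fun u : ℝ => u - s) 1 t := (hasDerivAt_id t).sub_const s
      have := HasDerivAt.scomp (𝕜 := ℝ) t (hasDerivAt_exp_smul_const (𝕂 := ℝ) a₂ (t - s)) hg
      simpa [Function.comp_def] using this
    have h1 : HasDerivAt (fun t : ℝ => exp (t • (-a₁))) ((-a₁) * exp (t • (-a₁))) t :=
      hasDerivAt_exp_smul_const' (𝕂 := ℝ) (-a₁) t
    have := h2.mul h1
    convert this using 1
    show H' t = _
    simp only [hH']
    noncomm_ring
    rfl
  have bound : ∀ t ∈ Set.Icc (0:ℝ) s, ‖H' t‖ ≤ C ^ 2 * Real.exp (-(δ * s)) * ‖a₂ - a₁‖ := by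
    intro t ht
    have e1 := hb2 t ht
    have e2 := hb1 t ht
    have hΔ : (0:ℝ) ≤ ‖a₂ - a₁‖ := norm_nonneg _
    have hexps : Real.exp (-(δ * (s - t))) * Real.exp (-(δ * t)) = Real.exp (-(δ * s)) := by
      rw [← Real.exp_add]; ring_nf
    calc ‖H' t‖ ≤ ‖exp ((t - s) • a₂)‖ * ‖(a₂ - a₁) * exp (t • (-a₁))‖ := norm_mul_le _ _
      _ ≤ ‖exp ((t - s) • a₂)‖ * (‖a₂ - a₁‖ * ‖exp (t • (-a₁))‖) := by
          exact mul_le_mul_of_nonneg_left (norm_mul_le _ _) (norm_nonneg _)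
      _ ≤ (C * Real.exp (-(δ * (s - t)))) * (‖a₂ - a₁‖ * (C * Real.exp (-(δ * t)))) := by
          apply mul_le_mul e1 (mul_le_mul_of_nonneg_left e2 hΔ)
            (mul_nonneg (norm_nonneg _) (norm_nonneg _))
            (le_trans (norm_nonneg _) e1)
      _ = C ^ 2 * (Real.exp (-(δ * (s - t))) * Real.exp (-(δ * t))) * ‖a₂ - a₁‖ := by ring
      _ = C ^ 2 * Real.exp (-(δ * s)) * ‖a₂ - a₁‖ := by rw [hexps]
  have := norm_image_sub_le_of_norm_deriv_le_segment'
    (f := H) (f' := H') (C := C ^ 2 * Real.exp (-(δ * s)) * ‖a₂ - a₁‖) (a := 0) (b := s)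
    (fun x hx => (hderiv x).hasDerivWithinAt)
    (fun x hx => bound x (Set.mem_Icc_of_Ico hx)) s (Set.right_mem_Icc.mpr hs)
  have hHs : H s = exp (-(s • a₁)) := by
    simp [hH, sub_self, zero_smul, exp_zero, smul_neg]
  have hH0 : H 0 = exp (-(s • a₂)) := by
    simp [hH, zero_smul, exp_zero, neg_smul]
  rw [hHs, hH0, sub_zero] at this
  linarith

set_option maxHeartbeats 1000000 in
set_option synthInstance.maxHeartbeats 400000 in
/-- If `B(r)` is differentiable with `‖∂B/∂r‖₂ ≤ M` and
`‖exp(-βB(r)s)‖₂ ≤ C e^{-βδs}` for all `β ∈ [0,1]`, `s ≥ 0`, then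
`‖∂/∂r exp(-B(r)s)‖₂ ≤ C² M s e^{-δs}`. -/
theorem stmt10 (n : ℕ) (B B' : ℝ → Matrix (Fin n) (Fin n) ℝ) (C M δ : ℝ)
    (hC : 0 < C) (hM : 0 < M) (hδ : 0 < δ)
    (hB : ∀ r, HasDerivAt B (B' r) r)
    (hB' : ∀ r, opNorm (B' r) ≤ M)
    (hexp : ∀ r : ℝ, ∀ β ∈ Set.Icc (0:ℝ) 1, ∀ s ≥ (0:ℝ),
      opNorm (NormedSpace.exp (-((β * s) • B r))) ≤ C * Real.exp (-(β * δ * s)))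
    (r s : ℝ) (hs : 0 ≤ s) (E : Matrix (Fin n) (Fin n) ℝ)
    (hE : HasDerivAt (fun r => NormedSpace.exp (-(s • B r))) E r) :
    opNorm E ≤ C ^ 2 * M * s * Real.exp (-(δ * s)) := by
  set φ := Matrix.toEuclideanCLM (𝕜 := ℝ) (n := Fin n) with hφdef
  -- trivial case s = 0
  rcases eq_or_lt_of_le hs with hs0 | hspos
  · have hconst : (fun r => NormedSpace.exp (-(s • B r))) =
        fun _ : ℝ => (1 : Matrix (Fin n) (Fin n) ℝ) := by
      funext y
      rw [← hs0]
      simp [NormedSpace.exp_zero]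
    rw [hconst] at hE
    have hE0 : E = 0 := (hasDerivAt_const r (1 : Matrix (Fin n) (Fin n) ℝ)).unique hE |>.symm
    rw [hE0]
    have : opNorm (0 : Matrix (Fin n) (Fin n) ℝ) = 0 := by
      unfold opNorm; rw [map_zero, norm_zero]
    rw [this, ← hs0]
    positivity
  -- s > 0 from here on
  have hbnd : ∀ (z t : ℝ), 0 ≤ t → t ≤ s →
      opNorm (NormedSpace.exp (-(t • B z))) ≤ C * Real.exp (-(δ * t)) := by
    intro z t ht hts
    have hβ : t / s ∈ Set.Icc (0:ℝ) 1 :=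
      ⟨div_nonneg ht hs, (div_le_one hspos).mpr hts⟩
    have h := hexp z (t / s) hβ s hs
    have h1 : t / s * s = t := div_mul_cancel₀ t (ne_of_gt hspos)
    have h2 : -(t / s * δ * s) = -(δ * t) := by
      field_simp
    rw [h1, h2] at h
    exact h
  -- opNorm basics
  have hopsub : ∀ X Y : Matrix (Fin n) (Fin n) ℝ, opNorm (X - Y) = ‖φ X - φ Y‖ := by
    intro X Y; unfold opNorm; rw [map_sub]
  have hφexp : ∀ X : Matrix (Fin n) (Fin n) ℝ,
      φ (NormedSpace.exp X) = NormedSpace.exp (φ X) := phi_exp_aux n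
  -- key Lipschitz-type estimate
  set K : ℝ := C ^ 2 * Real.exp (-(δ * s)) * s with hK
  have hKnn : 0 ≤ K := by positivity
  have key : ∀ y : ℝ,
      opNorm (NormedSpace.exp (-(s • B y)) - NormedSpace.exp (-(s • B r))) ≤
        K * opNorm (B y - B r) := by
    intro y
    have hb2 : ∀ t ∈ Set.Icc (0:ℝ) s,
        ‖NormedSpace.exp ((t - s) • φ (B r))‖ ≤ C * Real.exp (-(δ * (s - t))) := by
      intro t ht
      have : (t - s) • φ (B r) = φ (-((s - t) • B r)) := by
        rw [map_neg, _root_.map_smul]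
        module
      rw [this, ← hφexp]
      exact hbnd r (s - t) (by linarith [ht.2]) (by linarith [ht.1])
    have hb1 : ∀ t ∈ Set.Icc (0:ℝ) s,
        ‖NormedSpace.exp (t • (-(φ (B y))))‖ ≤ C * Real.exp (-(δ * t)) := by
      intro t ht
      have : t • (-(φ (B y))) = φ (-(t • B y)) := by
        rw [map_neg, _root_.map_smul]
        module
      rw [this, ← hφexp]
      exact hbnd y t ht.1 ht.2
    have hd := duhamel_aux (φ (B y)) (φ (B r)) s C δ hs hb2 hb1
    have e1 : NormedSpace.exp (-(s • φ (B y))) = φ (NormedSpace.exp (-(s • B y))) := by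
      rw [hφexp, map_neg, _root_.map_smul]
    have e2 : NormedSpace.exp (-(s • φ (B r))) = φ (NormedSpace.exp (-(s • B r))) := by
      rw [hφexp, map_neg, _root_.map_smul]
    rw [e1, e2] at hd
    rw [hopsub]
    calc ‖φ (NormedSpace.exp (-(s • B y))) - φ (NormedSpace.exp (-(s • B r)))‖ ≤
        (C ^ 2 * Real.exp (-(δ * s)) * ‖φ (B r) - φ (B y)‖) * s := hd
      _ = K * ‖φ (B y) - φ (B r)‖ := by rw [norm_sub_rev]; ring
      _ = K * opNorm (B y - B r) := by rw [hopsub]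
  -- continuity of opNorm
  have hφc : Continuous φ :=
    LinearMap.continuous_of_finiteDimensional
      (φ.toAlgEquiv.toLinearMap : Matrix (Fin n) (Fin n) ℝ →ₗ[ℝ] _)
  have hcont : Continuous (opNorm (n := n)) := by
    exact continuous_norm.comp hφc
  -- smul and opNorm
  have hopsmul : ∀ (c : ℝ) (X : Matrix (Fin n) (Fin n) ℝ),
      opNorm (c • X) = |c| * opNorm X := by
    intro c X
    unfold opNorm
    rw [_root_.map_smul]
    exact (norm_smul c (Matrix.toEuclideanCLM (𝕜 := ℝ) X)).trans (by rw [Real.norm_eq_abs])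
  -- pass to the limit of slopes
  set f : ℝ → Matrix (Fin n) (Fin n) ℝ := fun r => NormedSpace.exp (-(s • B r)) with hf
  have ht1 : Filter.Tendsto (slope f r) (nhdsWithin r {r}ᶜ) (nhds E) :=
    hasDerivAt_iff_tendsto_slope.mp hE
  have ht2 : Filter.Tendsto (slope B r) (nhdsWithin r {r}ᶜ) (nhds (B' r)) :=
    hasDerivAt_iff_tendsto_slope.mp (hB r)
  have T1 : Filter.Tendsto (fun y => opNorm (slope f r y)) (nhdsWithin r {r}ᶜ)
      (nhds (opNorm E)) := (hcont.tendsto E).comp ht1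
  have T2 : Filter.Tendsto (fun y => K * opNorm (slope B r y)) (nhdsWithin r {r}ᶜ)
      (nhds (K * opNorm (B' r))) :=
    (tendsto_const_nhds.mul ((hcont.tendsto (B' r)).comp ht2))
  have hle : opNorm E ≤ K * opNorm (B' r) := by
    refine le_of_tendsto_of_tendsto T1 T2 ?_
    filter_upwards [eventually_mem_nhdsWithin] with y hy
    have hyr : y ≠ r := hy
    have hslopef : slope f r y = (y - r)⁻¹ • (f y - f r) := slope_def_module f r y
    have hslopeB : slope B r y = (y - r)⁻¹ • (B y - B r) := slope_def_module B r y
    rw [hslopef, hslopeB, hopsmul, hopsmul, abs_inv]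
    calc |y - r|⁻¹ * opNorm (f y - f r) ≤ |y - r|⁻¹ * (K * opNorm (B y - B r)) :=
        mul_le_mul_of_nonneg_left (key y) (by positivity)
      _ = K * (|y - r|⁻¹ * opNorm (B y - B r)) := by ring
  calc opNorm E ≤ K * opNorm (B' r) := hle
    _ ≤ K * M := mul_le_mul_of_nonneg_left (hB' r) hKnn
    _ = C ^ 2 * M * s * Real.exp (-(δ * s)) := by rw [hK]; ring
end
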